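/- Let γ ∈ (0,1), N ∈ ℕ with N ≥ 1, Σ̂ ∈ ℝ^{d×d} be symmetric positive definite, M̂ ∈ ℝ^{d×d} be such that I_d − γM̂ is invertible, and ν_0 ∈ ℝ^d. Define J : ℝ^d × ℝ^d → ℝ by J(x, y) := −(1/(2N)) yᵀΣ̂y + (1/N) xᵀ(I_d − γM̂)ᵀΣ̂y − ν_0ᵀx. Set x* := N(I_d − γM̂)^{-1}Σ̂^{-1}((I_d − γM̂)ᵀ)^{-1}ν_0 and y* := NΣ̂^{-1}((I_d − γM̂)ᵀ)^{-1}ν_0. Then (x*, y*) is a saddle point of J: for all x, y ∈ ℝ^d, J(x*, y) ≤ J(x*, y*) ≤ J(x, y*). Moreover, for any data φ_1,…,φ_N ∈ ℝ^d and r'_1,…,r'_N ∈ ℝ with Σ̂ = Σ_{n=1}^N φ_nφ_nᵀ, the DualDICE value estimate (1/N) Σ_{n=1}^N (y*ᵀφ_n) r'_n equals ν_0ᵀ(I_d − γM̂)^{-1}R̂, where R̂ := Σ̂^{-1} Σ_{n=1}^N r'_nφ_n. -/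

import Mathlib

open Matrix Finset

/-- **Equivalence between DualDICE and the FQI/plug-in estimator** (discounted case,
linear function classes, `λ = 0`).  The pair `(x*, y*)` is a saddle point of the DualDICE
objective `J`, and the resulting DualDICE value estimate equals the plug-in estimate
`ν₀ᵀ(I − γM̂)⁻¹R̂`. -/
theorem dualdice_saddle_and_equivalence (d N : ℕ) (γ : ℝ) (hγ : γ ∈ Set.Ioo (0 : ℝ) 1)
    (hN : 1 ≤ N)
    (Shat : Matrix (Fin d) (Fin d) ℝ) (hShat : Shat.PosDef)
    (Mhat : Matrix (Fin d) (Fin d) ℝ)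
    (hMhat : IsUnit ((1 : Matrix (Fin d) (Fin d) ℝ) - γ • Mhat))
    (ν0 : Fin d → ℝ)
    (J : (Fin d → ℝ) → (Fin d → ℝ) → ℝ)
    (hJ : ∀ x y, J x y = -(1 / (2 * N)) * (y ⬝ᵥ Shat *ᵥ y)
        + (1 / N) * (x ⬝ᵥ (((1 : Matrix (Fin d) (Fin d) ℝ) - γ • Mhat)ᵀ * Shat) *ᵥ y)
        - ν0 ⬝ᵥ x)
    (xstar ystar : Fin d → ℝ)
    (hx : xstar = (N : ℝ) •
      ((((1 : Matrix (Fin d) (Fin d) ℝ) - γ • Mhat)⁻¹ * Shat⁻¹ *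
        (((1 : Matrix (Fin d) (Fin d) ℝ) - γ • Mhat)ᵀ)⁻¹) *ᵥ ν0))
    (hy : ystar = (N : ℝ) •
      ((Shat⁻¹ * (((1 : Matrix (Fin d) (Fin d) ℝ) - γ • Mhat)ᵀ)⁻¹) *ᵥ ν0)) :
    (∀ x y : Fin d → ℝ, J xstar y ≤ J xstar ystar ∧ J xstar ystar ≤ J x ystar) ∧
    (∀ (φ : Fin N → Fin d → ℝ) (r' : Fin N → ℝ),
      Shat = ∑ n, vecMulVec (φ n) (φ n) →
      (1 / N) * ∑ n, (ystar ⬝ᵥ φ n) * r' n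
        = ν0 ⬝ᵥ (((1 : Matrix (Fin d) (Fin d) ℝ) - γ • Mhat)⁻¹ *ᵥ
            (Shat⁻¹ *ᵥ ∑ n, r' n • φ n))) := by
  classical
  set A : Matrix (Fin d) (Fin d) ℝ := (1 : Matrix (Fin d) (Fin d) ℝ) - γ • Mhat with hAdef
  have hNe : (N : ℝ) ≠ 0 := by positivity
  have hAdet : IsUnit A.det := (Matrix.isUnit_iff_isUnit_det A).mp hMhat
  have hATdet : IsUnit Aᵀ.det := by rwa [Matrix.det_transpose]
  have hSdet : IsUnit Shat.det := hShat.det_pos.ne'.isUnit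
  have hsym : Shatᵀ = Shat := hShat.isHermitian.eq
  have hSwap : ∀ u v : Fin d → ℝ, u ⬝ᵥ Shat *ᵥ v = v ⬝ᵥ Shat *ᵥ u := by
    intro u v
    rw [Matrix.dotProduct_mulVec, ← Matrix.mulVec_transpose, hsym, dotProduct_comm]
  -- key matrix identities
  have key1 : A *ᵥ xstar = ystar := by
    rw [hx, hy, Matrix.mulVec_smul, Matrix.mulVec_mulVec, mul_assoc,
      Matrix.mul_nonsing_inv_cancel_left _ _ hAdet]
  have key2 : (Aᵀ * Shat) *ᵥ ystar = (N : ℝ) • ν0 := by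
    rw [hy, Matrix.mulVec_smul, Matrix.mulVec_mulVec]
    have : Aᵀ * Shat * (Shat⁻¹ * Aᵀ⁻¹) = 1 := by
      rw [mul_assoc, Matrix.mul_nonsing_inv_cancel_left _ _ hSdet,
        Matrix.mul_nonsing_inv _ hATdet]
    rw [this, Matrix.one_mulVec]
  have hJx : ∀ y, J xstar y = -(1 / (2 * N)) * (y ⬝ᵥ Shat *ᵥ y)
      + (1 / N) * (ystar ⬝ᵥ Shat *ᵥ y) - ν0 ⬝ᵥ xstar := by
    intro y
    rw [hJ]
    congr 2
    rw [← Matrix.mulVec_mulVec, Matrix.dotProduct_mulVec, ← Matrix.mulVec_transpose,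
      Matrix.transpose_transpose, key1, Matrix.dotProduct_mulVec,
      ← Matrix.mulVec_transpose, hsym]
  have hJy : ∀ x, J x ystar = -(1 / (2 * N)) * (ystar ⬝ᵥ Shat *ᵥ ystar) := by
    intro x
    rw [hJ, key2, dotProduct_smul, smul_eq_mul, dotProduct_comm x ν0]
    have h1 : (1 : ℝ) / N * (N * (ν0 ⬝ᵥ x)) = ν0 ⬝ᵥ x := by field_simp
    rw [h1]
    ring
  constructor
  · intro x y
    constructor
    · -- J xstar y ≤ J xstar ystar
      have h0 : 0 ≤ (ystar - y) ⬝ᵥ Shat *ᵥ (ystar - y) := by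
        have := hShat.posSemidef.dotProduct_mulVec_nonneg (ystar - y)
        simpa using this
      have hexp : (ystar - y) ⬝ᵥ Shat *ᵥ (ystar - y)
          = ystar ⬝ᵥ Shat *ᵥ ystar - 2 * (ystar ⬝ᵥ Shat *ᵥ y) + y ⬝ᵥ Shat *ᵥ y := by
        rw [Matrix.mulVec_sub, dotProduct_sub, sub_dotProduct,
          sub_dotProduct, hSwap y ystar]
        ring
      rw [hexp] at h0
      rw [hJx y, hJx ystar]
      set a := ystar ⬝ᵥ Shat *ᵥ ystar
      set b := ystar ⬝ᵥ Shat *ᵥ y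
      set c := y ⬝ᵥ Shat *ᵥ y
      have heq : (-(1 / (2 * (N:ℝ))) * a + 1 / N * a)
          - (-(1 / (2 * (N:ℝ))) * c + 1 / N * b) = (a - 2 * b + c) / (2 * N) := by
        field_simp
        ring
      have hdiv : 0 ≤ (a - 2 * b + c) / (2 * (N:ℝ)) := by positivity
      linarith
    · rw [hJy x, hJy xstar]
  · intro φ r' _
    have hsum : ystar ⬝ᵥ (∑ n, r' n • φ n) = ∑ n, (ystar ⬝ᵥ φ n) * r' n := by
      simp only [dotProduct, Finset.sum_apply, Pi.smul_apply, smul_eq_mul,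
        Finset.mul_sum]
      rw [Finset.sum_comm]
      refine Finset.sum_congr rfl fun n _ => ?_
      rw [Finset.sum_mul]
      refine Finset.sum_congr rfl fun i _ => ?_
      ring
    rw [Matrix.mulVec_mulVec, Matrix.dotProduct_mulVec,
      ← Matrix.mulVec_transpose, Matrix.transpose_mul, Matrix.transpose_nonsing_inv,
      Matrix.transpose_nonsing_inv, hsym]
    rw [← hsum, hy, smul_dotProduct, smul_eq_mul]
    field_simp
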